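/- Let γ be a simple loop in a graph G, given by edges e : Fin n → E. Then every loop δ homologous to γ is a cyclic rotation of γ: if δ is given by edges f : Fin m → E and [δ] = [γ], then m = n and there exists k such that f(i) = e(i + k) for all i, indices taken mod n. -/
import Mathlib


/-- Every loop homologous to a simple loop is a cyclic rotation of it.
Let `γ` be a simple loop with edges `e : Fin n → E` and let `δ` be a loop with edges
`f : Fin m → E` whose associated 1-chain `∑ i, single (f i) 1` equals that of `γ`.
Then `m = n` and there is `k` with `f i = e ((i + k) mod n)` for all `i`. -/
theorem loop_homologous_to_simple_loop_is_rotation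
    {E V : Type*} (s t : E → V)
    {n m : ℕ} (hn : 0 < n) (hm : 0 < m)
    (e : Fin n → E) (f : Fin m → E)
    -- γ is a loop
    (he : ∀ i : Fin n, t (e i) = s (e ⟨(i.val + 1) % n, Nat.mod_lt _ hn⟩))
    -- γ is simple
    (hsimple : Function.Injective fun i : Fin n => s (e i))
    -- δ is a loop
    (hf : ∀ i : Fin m, t (f i) = s (f ⟨(i.val + 1) % m, Nat.mod_lt _ hm⟩))
    -- δ is homologous to γ
    (hchain : (∑ i, Finsupp.single (f i) 1 : E →₀ ℕ) = ∑ i, Finsupp.single (e i) 1) :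
    m = n ∧ ∃ k : ℕ, ∀ i : Fin m, f i = e ⟨(i.val + k) % n, Nat.mod_lt _ hn⟩ := by
  classical
  have he_inj : Function.Injective e := fun i j h => hsimple (congrArg s h)
  have key : ∀ x, (Finset.univ.filter fun i : Fin m => f i = x).card
      = (Finset.univ.filter fun i : Fin n => e i = x).card := by
    intro x
    have h := DFunLike.congr_fun hchain x
    simp only [Finsupp.coe_finset_sum, Finset.sum_apply, Finsupp.single_apply] at h
    rw [Finset.card_filter, Finset.card_filter]
    exact h
  have hcard_e : ∀ j0 : Fin n, (Finset.univ.filter fun j : Fin n => e j = e j0) = {j0} := by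
    intro j0; ext j; simp [he_inj.eq_iff]
  have hexists : ∀ i : Fin m, ∃ j : Fin n, e j = f i := by
    intro i
    by_contra h
    push_neg at h
    have h0 : (Finset.univ.filter fun j : Fin n => e j = f i) = ∅ := by
      ext j; simp [h j]
    have h1 := key (f i)
    rw [h0] at h1
    have : i ∈ Finset.univ.filter fun i' : Fin m => f i' = f i := by simp
    simp only [Finset.card_empty, Finset.card_eq_zero] at h1
    rw [h1] at this
    simp at this
  choose σ hσ using hexists
  have hfinj : Function.Injective f := by
    intro i i' h
    have h1 := key (e (σ i))
    rw [hcard_e, Finset.card_singleton] at h1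
    refine Finset.card_le_one.mp h1.le i ?_ i' ?_
    · rw [Finset.mem_filter]
      exact ⟨Finset.mem_univ _, by rw [hσ i]⟩
    · rw [Finset.mem_filter]
      exact ⟨Finset.mem_univ _, by rw [hσ i, h]⟩
  have hσinj : Function.Injective σ := by
    intro i i' h
    apply hfinj
    rw [← hσ i, ← hσ i', h]
  have hσsurj : Function.Surjective σ := by
    intro j
    have h1 := key (e j)
    rw [hcard_e] at h1
    have : (Finset.univ.filter fun i : Fin m => f i = e j).Nonempty := by
      rw [← Finset.card_pos, h1]; simp
    obtain ⟨i, hi⟩ := this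
    simp only [Finset.mem_filter] at hi
    exact ⟨i, he_inj (by rw [hσ i, hi.2])⟩
  have hmn : m = n := by
    simpa using Fintype.card_of_bijective ⟨hσinj, hσsurj⟩
  subst hmn
  refine ⟨rfl, (σ ⟨0, hn⟩).val, ?_⟩
  -- step lemma
  have hstep : ∀ i : Fin m, σ ⟨(i.val + 1) % m, Nat.mod_lt _ hn⟩
      = ⟨((σ i).val + 1) % m, Nat.mod_lt _ hn⟩ := by
    intro i
    apply hsimple
    have h1 := hf i
    rw [← hσ i, ← hσ ⟨(i.val + 1) % m, Nat.mod_lt _ hm⟩] at h1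
    have h2 := he (σ i)
    exact (h1.symm.trans h2 : _)
  have hiter : ∀ d : ℕ, ∀ i : Fin m, σ ⟨(i.val + d) % m, Nat.mod_lt _ hn⟩
      = ⟨((σ i).val + d) % m, Nat.mod_lt _ hn⟩ := by
    intro d
    induction d with
    | zero =>
      intro i
      simp [Nat.mod_eq_of_lt i.isLt, Nat.mod_eq_of_lt (σ i).isLt]
    | succ d ih =>
      intro i
      have e1 : (⟨(i.val + (d + 1)) % m, Nat.mod_lt _ hn⟩ : Fin m)
          = ⟨((i.val + d) % m + 1) % m, Nat.mod_lt _ hn⟩ :=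
        Fin.ext (show (i.val + (d + 1)) % m = ((i.val + d) % m + 1) % m by
          rw [Nat.mod_add_mod, Nat.add_assoc])
      have hkey := hstep ⟨(i.val + d) % m, Nat.mod_lt _ hn⟩
      rw [ih i] at hkey
      rw [e1, hkey]
      exact Fin.ext (show (((σ i).val + d) % m + 1) % m = ((σ i).val + (d + 1)) % m by
        rw [Nat.mod_add_mod, Nat.add_assoc])
  intro i
  rw [← hσ i]
  congr 1
  have h0 : σ i = ⟨((σ ⟨0, hn⟩).val + i.val) % m, Nat.mod_lt _ hn⟩ := by
    have h1 := hiter i.val ⟨0, hn⟩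
    simpa [Nat.mod_eq_of_lt i.isLt] using h1
  rw [h0]
  exact Fin.ext (show ((σ ⟨0, hn⟩).val + i.val) % m = (i.val + (σ ⟨0, hn⟩).val) % m by
    rw [Nat.add_comm])
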